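/- Let f(λ,μ) be a nonzero polynomial in ℂ[λ,μ] with f(λ,μ) = −f(μ,λ), whose coefficients f_{ij} satisfy f_{ij}f_{kl} − f_{ik}f_{jl} + f_{jk}f_{il} = 0 for all i, j, k, l. Fix i₀ < j₀ with f_{i₀ j₀} ≠ 0 and define P₁(λ) = Σ_k f_{k, j₀} λ^k and P₂(λ) = −(1/f_{i₀ j₀}) Σ_k f_{k, i₀} λ^k. Suppose a ∈ ℂ[λ] satisfies a(λ) = (a_{i₀}/f_{i₀ j₀})·P₁(λ) + a_{j₀}·P₂(λ) with a_{i₀} ≠ 0. Then a polynomial b ∈ ℂ[λ] satisfies a(λ)b(μ) − a(μ)b(λ) = f(λ,μ) if and only if b(λ) = k·a(λ) + (f_{i₀ j₀}/a_{i₀})·P₂(λ) for some k ∈ ℂ. -/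

import Mathlib

/-- Evaluation of a bivariate polynomial f(λ,μ) at a pair of complex numbers. -/
noncomputable def ev2 (f : MvPolynomial (Fin 2) ℂ) (x y : ℂ) : ℂ :=
  MvPolynomial.eval ![x, y] f

/-- The coefficient f_{ij} of λ^i μ^j in a bivariate polynomial f(λ,μ). -/
noncomputable def coeff2 (f : MvPolynomial (Fin 2) ℂ) (i j : ℕ) : ℂ :=
  MvPolynomial.coeff (Finsupp.single 0 i + Finsupp.single 1 j) f

lemma pair_eq (d : Fin 2 →₀ ℕ) : d = Finsupp.single 0 (d 0) + Finsupp.single 1 (d 1) := by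
  ext i; fin_cases i <;> simp

lemma pair_apply (i j : ℕ) :
    ((Finsupp.single (0:Fin 2) i + Finsupp.single 1 j : Fin 2 →₀ ℕ) 0 = i) ∧
    ((Finsupp.single (0:Fin 2) i + Finsupp.single 1 j : Fin 2 →₀ ℕ) 1 = j) := by
  constructor <;> simp

lemma ev2_eq_sum (f : MvPolynomial (Fin 2) ℂ) (x y : ℂ) :
    ev2 f x y = ∑ d ∈ f.support, MvPolynomial.coeff d f * x ^ (d 0) * y ^ (d 1) := by
  rw [ev2, MvPolynomial.eval_eq' ]
  refine Finset.sum_congr rfl fun d _ => ?_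
  rw [Fin.prod_univ_two]
  simp [mul_assoc]

lemma hanti (f : MvPolynomial (Fin 2) ℂ)
    (hskew : ∀ l m : ℂ, ev2 f l m = - ev2 f m l) :
    ∀ i j : ℕ, coeff2 f j i = - coeff2 f i j := by
  have hfg : f = - (MvPolynomial.rename (Equiv.swap (0:Fin 2) 1) f) := by
    apply MvPolynomial.funext
    intro x
    have h1 : ![x 0, x 1] = x := by funext i; fin_cases i <;> rfl
    have h2 : (x ∘ (Equiv.swap (0:Fin 2) 1)) = ![x 1, x 0] := by
      funext i; fin_cases i <;> simp
    rw [map_neg, MvPolynomial.eval_rename, h2]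
    have := hskew (x 0) (x 1)
    rw [ev2, ev2, h1] at this
    exact this
  intro i j
  have h3 : Finsupp.mapDomain (Equiv.swap (0:Fin 2) 1)
      (Finsupp.single 0 i + Finsupp.single 1 j)
      = Finsupp.single (0:Fin 2) j + Finsupp.single 1 i := by
    rw [Finsupp.mapDomain_add, Finsupp.mapDomain_single, Finsupp.mapDomain_single]
    simp [add_comm]
  have h4 := MvPolynomial.coeff_rename_mapDomain (Equiv.swap (0:Fin 2) 1)
    (Equiv.injective _) f (Finsupp.single 0 i + Finsupp.single 1 j)
  rw [h3] at h4
  calc coeff2 f j i = MvPolynomial.coeff (Finsupp.single (0:Fin 2) j + Finsupp.single 1 i) f := rfl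
    _ = - coeff2 f i j := by
        conv_lhs => rw [hfg]
        rw [MvPolynomial.coeff_neg, h4]; rfl

lemma ev2_eq_grid (f : MvPolynomial (Fin 2) ℂ) (N : ℕ)
    (hN : ∀ d ∈ f.support, d 0 < N ∧ d 1 < N) (x y : ℂ) :
    ev2 f x y = ∑ i ∈ Finset.range N, ∑ j ∈ Finset.range N,
      coeff2 f i j * x ^ i * y ^ j := by
  rw [ev2_eq_sum, ← Finset.sum_product']
  set F : ℕ × ℕ → ℂ := fun p => coeff2 f p.1 p.2 * x ^ p.1 * y ^ p.2 with hF
  have hinj : Set.InjOn (fun d : Fin 2 →₀ ℕ => ((d 0 : ℕ), (d 1 : ℕ))) f.support := by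
    intro d _ e _ h
    rw [pair_eq d, pair_eq e]
    simp only [Prod.mk.injEq] at h
    rw [h.1, h.2]
  have hsub : f.support.image (fun d => ((d 0 : ℕ), (d 1 : ℕ)))
      ⊆ Finset.range N ×ˢ Finset.range N := by
    intro p hp
    obtain ⟨d, hd, rfl⟩ := Finset.mem_image.mp hp
    simp [Finset.mem_product, (hN d hd).1, (hN d hd).2]
  have h0 : ∀ p ∈ Finset.range N ×ˢ Finset.range N,
      p ∉ f.support.image (fun d => ((d 0 : ℕ), (d 1 : ℕ))) → F p = 0 := by
    intro p _ hp
    have : coeff2 f p.1 p.2 = 0 := by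
      by_contra hc
      have hmem : (Finsupp.single (0:Fin 2) p.1 + Finsupp.single 1 p.2) ∈ f.support :=
        MvPolynomial.mem_support_iff.mpr hc
      exact hp (Finset.mem_image.mpr ⟨_, hmem, by
        rw [(pair_apply p.1 p.2).1, (pair_apply p.1 p.2).2]⟩)
    simp [hF, this]
  rw [← Finset.sum_subset hsub h0, Finset.sum_image hinj]
  refine Finset.sum_congr rfl fun d _ => ?_
  simp only [hF]
  congr 1
  congr 1
  rw [coeff2]
  congr 1
  exact pair_eq d

/-- in the setting of STATEMENT 6, if a = (a_{i₀}/f_{i₀ j₀})·P₁ + a_{j₀}·P₂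
with a_{i₀} ≠ 0, then b solves a(λ)b(μ) − a(μ)b(λ) = f(λ,μ) iff
b = k·a + (f_{i₀ j₀}/a_{i₀})·P₂ for some k ∈ ℂ. -/
theorem stmt_7 (f : MvPolynomial (Fin 2) ℂ) (hf : f ≠ 0)
    (hskew : ∀ l m : ℂ, ev2 f l m = - ev2 f m l)
    (hpluecker : ∀ i j k l : ℕ,
      coeff2 f i j * coeff2 f k l - coeff2 f i k * coeff2 f j l
        + coeff2 f j k * coeff2 f i l = 0)
    (i₀ j₀ : ℕ) (hij : i₀ < j₀) (hne : coeff2 f i₀ j₀ ≠ 0)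
    (P₁ P₂ : Polynomial ℂ)
    (hP₁ : ∀ k : ℕ, P₁.coeff k = coeff2 f k j₀)
    (hP₂ : ∀ k : ℕ, P₂.coeff k = -(1 / coeff2 f i₀ j₀) * coeff2 f k i₀)
    (a : Polynomial ℂ)
    (ha : a = Polynomial.C (a.coeff i₀ / coeff2 f i₀ j₀) * P₁ + Polynomial.C (a.coeff j₀) * P₂)
    (hai : a.coeff i₀ ≠ 0)
    (b : Polynomial ℂ) :
    (∀ l m : ℂ, a.eval l * b.eval m - a.eval m * b.eval l = ev2 f l m) ↔
    (∃ k : ℂ, b = Polynomial.C k * a + Polynomial.C (coeff2 f i₀ j₀ / a.coeff i₀) * P₂) := by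
  set c := coeff2 f i₀ j₀ with hc
  have hanti' := hanti f hskew
  -- key coefficient identity
  have key : ∀ i j : ℕ, P₁.coeff i * P₂.coeff j - P₁.coeff j * P₂.coeff i = coeff2 f i j := by
    intro i j
    have h := hpluecker i₀ j₀ i j
    rw [hP₁, hP₁, hP₂, hP₂, hanti' i₀ i, hanti' i₀ j, hanti' j₀ j, hanti' j₀ i]
    field_simp
    rw [← hc] at h
    linear_combination -h
  -- choose N
  set N := f.totalDegree + P₁.natDegree + P₂.natDegree + 1 with hNdef
  have hN : ∀ d ∈ f.support, d 0 < N ∧ d 1 < N := by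
    intro d hd
    have h1 : d 0 + d 1 ≤ f.totalDegree := by
      have := MvPolynomial.le_totalDegree hd
      rwa [Finsupp.sum_fintype _ _ (fun _ => rfl), Fin.sum_univ_two] at this
    omega
  have hP₁N : P₁.natDegree < N := by omega
  have hP₂N : P₂.natDegree < N := by omega
  -- evaluation identity
  have hev : ∀ x y : ℂ, ev2 f x y = P₁.eval x * P₂.eval y - P₁.eval y * P₂.eval x := by
    intro x y
    have e1 : P₁.eval x * P₂.eval y = ∑ i ∈ Finset.range N, ∑ j ∈ Finset.range N,
        P₁.coeff i * P₂.coeff j * x ^ i * y ^ j := by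
      rw [Polynomial.eval_eq_sum_range' hP₁N, Polynomial.eval_eq_sum_range' hP₂N,
        Finset.sum_mul_sum]
      exact Finset.sum_congr rfl fun i _ => Finset.sum_congr rfl fun j _ => by ring
    have e2 : P₁.eval y * P₂.eval x = ∑ i ∈ Finset.range N, ∑ j ∈ Finset.range N,
        P₁.coeff j * P₂.coeff i * x ^ i * y ^ j := by
      rw [Polynomial.eval_eq_sum_range' hP₁N, Polynomial.eval_eq_sum_range' hP₂N,
        Finset.sum_mul_sum, Finset.sum_comm]
      exact Finset.sum_congr rfl fun i _ => Finset.sum_congr rfl fun j _ => by ring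
    rw [ev2_eq_grid f N hN x y, e1, e2, ← Finset.sum_sub_distrib]
    refine Finset.sum_congr rfl fun i _ => ?_
    rw [← Finset.sum_sub_distrib]
    refine Finset.sum_congr rfl fun j _ => ?_
    rw [← key i j]
    ring
  -- pointwise formula for a
  have haev : ∀ x : ℂ, a.eval x = a.coeff i₀ / c * P₁.eval x + a.coeff j₀ * P₂.eval x := by
    intro x
    conv_lhs => rw [ha]
    simp
  -- forward solutions
  have hsolves : ∀ k : ℂ, ∀ l m : ℂ,
      a.eval l * (Polynomial.C k * a + Polynomial.C (c / a.coeff i₀) * P₂).eval m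
      - a.eval m * (Polynomial.C k * a + Polynomial.C (c / a.coeff i₀) * P₂).eval l
      = ev2 f l m := by
    intro k l m
    simp only [Polynomial.eval_add, Polynomial.eval_mul, Polynomial.eval_C]
    rw [hev, haev l, haev m]
    field_simp
    ring
  constructor
  · intro hsol
    have hane : ∃ m : ℂ, a.eval m ≠ 0 := by
      by_contra h
      push_neg at h
      have : a = 0 := Polynomial.funext fun x => by simp [h x]
      rw [this] at hai
      simp at hai
    obtain ⟨m, hm⟩ := hane
    refine ⟨(b.eval m - c / a.coeff i₀ * P₂.eval m) / a.eval m, ?_⟩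
    apply Polynomial.funext
    intro l
    have h1 := hsol l m
    have h2 := hsolves 0 l m
    simp only [Polynomial.eval_add, Polynomial.eval_mul, Polynomial.eval_C, map_zero,
      zero_mul, zero_add] at h2 ⊢
    obtain ⟨γ, hγ⟩ : ∃ γ : ℂ, c / a.coeff i₀ = γ := ⟨_, rfl⟩
    rw [hγ] at h2 ⊢
    field_simp
    linear_combination h2 - h1
  · rintro ⟨k, rfl⟩
    exact hsolves k
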